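/- Let d ≥ 2, let G = (V,E) be a strongly connected directed graph on vertices {1,…,n}, and let A = [a_ij] be a weight matrix for G. Then for every configuration x = (x_1,…,x_n) of unit vectors in ℝ^d, Σ_{i,j} a_ij ⟨x_i, x_j⟩ ≤ Σ_{i,j} a_ij, and equality holds if and only if x_1 = x_2 = … = x_n. Equivalently, the set of maximizers of x ↦ Σ_{i,j} a_ij ⟨x_i, x_j⟩ over configurations is exactly the consensus set C. -/
import Mathlib


open scoped BigOperators InnerProductSpace

/-- for a weight matrix of a strongly connected directed graph,
`Σ_{i,j} a_ij ⟨x_i, x_j⟩ ≤ Σ_{i,j} a_ij` for every configuration of unit vectors,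
with equality iff all the `x_i` are equal (the maximizers are exactly the consensus set). -/
theorem stmt_9 (n d : ℕ) (hn : 1 ≤ n) (hd : 2 ≤ d)
    (E : Fin n → Fin n → Prop)
    (hconn : ∀ i j, Relation.ReflTransGen E i j)
    (A : Matrix (Fin n) (Fin n) ℝ)
    (hApos : ∀ i j, 0 ≤ A i j)
    (hAE : ∀ i j, i ≠ j → (0 < A i j ↔ E i j))
    (x : Fin n → EuclideanSpace ℝ (Fin d)) (hx : ∀ i, ‖x i‖ = 1) :
    (∑ i, ∑ j, A i j * ⟪x i, x j⟫_ℝ ≤ ∑ i, ∑ j, A i j) ∧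
    ((∑ i, ∑ j, A i j * ⟪x i, x j⟫_ℝ = ∑ i, ∑ j, A i j) ↔ ∀ i j, x i = x j) := by
  have hinner : ∀ i j, ⟪x i, x j⟫_ℝ ≤ 1 := fun i j => by
    calc ⟪x i, x j⟫_ℝ ≤ ‖x i‖ * ‖x j‖ := real_inner_le_norm _ _
    _ = 1 := by rw [hx, hx, one_mul]
  have hterm : ∀ i j, A i j * ⟪x i, x j⟫_ℝ ≤ A i j := fun i j => by
    calc A i j * ⟪x i, x j⟫_ℝ ≤ A i j * 1 :=
      mul_le_mul_of_nonneg_left (hinner i j) (hApos i j)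
    _ = A i j := mul_one _
  have hle : ∀ i ∈ Finset.univ, ∑ j, A i j * ⟪x i, x j⟫_ℝ ≤ ∑ j, A i j := fun i _ =>
    Finset.sum_le_sum fun j _ => hterm i j
  refine ⟨Finset.sum_le_sum hle, ⟨fun heq => ?_, fun hall => ?_⟩⟩
  · -- equality: each term equal
    have h1 := (Finset.sum_eq_sum_iff_of_le hle).mp heq
    have h2 : ∀ i j, A i j * ⟪x i, x j⟫_ℝ = A i j := fun i j => by
      have := (Finset.sum_eq_sum_iff_of_le (fun j _ => hterm i j)).mp
        (h1 i (Finset.mem_univ i)) j (Finset.mem_univ j)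
      exact this
    have hE : ∀ i j, E i j → x i = x j := by
      intro i j hij
      by_cases h : i = j
      · rw [h]
      · have hA : 0 < A i j := (hAE i j h).mpr hij
        have : ⟪x i, x j⟫_ℝ = 1 := by
          have h3 := h2 i j
          have : A i j * ⟪x i, x j⟫_ℝ = A i j * 1 := by rw [mul_one]; exact h3
          exact mul_left_cancel₀ hA.ne' this
        exact (inner_eq_one_iff_of_norm_eq_one (hx i) (hx j)).mp this
    intro i j
    induction hconn i j with
    | refl => rfl
    | tail _ h ih => exact ih.trans (hE _ _ h)
  · have : ∀ i j, ⟪x i, x j⟫_ℝ = 1 := fun i j => by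
      rw [hall i j, real_inner_self_eq_norm_sq, hx j]; norm_num
    simp [this]
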